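/- Let (X₁,Y₁),…,(Xₙ,Yₙ), n > 3, be iid copies of a pair (X,Y) of random vectors with X ∈ ℝ^p and Y ∈ ℝ^q, and set a_{kℓ} := |X_k − X_ℓ|, b_{kℓ} := |Y_k − Y_ℓ| (Euclidean norms). Define T₁ := Σ_{k≠ℓ} a_{kℓ}b_{kℓ}, T₂ := (Σ_{k,ℓ} a_{kℓ})(Σ_{k,ℓ} b_{kℓ}), T₃ := Σ_k (Σ_ℓ a_{kℓ})(Σ_ℓ b_{kℓ}). Let α := E|X−X'|, β := E|Y−Y'|, γ := E[|X−X'||Y−Y'|], δ := E[|X−X'||Y−Y''|], where (X,Y),(X',Y'),(X'',Y'') are iid, and assume these expectations are finite. Then E[T₁] = n(n−1)γ, E[T₂] = n(n−1){(n−2)(n−3)αβ + 2γ + 4(n−2)δ}, and E[T₃] = n(n−1){(n−2)δ + γ}. -/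

import Mathlib

open MeasureTheory ProbabilityTheory


lemma sum_eq_on_compl {n : ℕ} (s : Finset (Fin n)) (f : Fin n → ℝ) (z : ℝ)
    (h : ∀ m, m ∉ s → f m = z) :
    ∑ m, f m = ∑ m ∈ s, f m + ((n : ℝ) - s.card) * z := by
  have h1 : ∑ m ∈ s, (f m - z) = ∑ m, (f m - z) :=
    Finset.sum_subset (Finset.subset_univ s) (fun x _ hx => by rw [h x hx]; ring)
  have h2 : ∑ m : Fin n, (f m - z) = (∑ m, f m) - n * z := by
    rw [Finset.sum_sub_distrib]; simp [Finset.card_univ]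
  have h3 : ∑ m ∈ s, (f m - z) = (∑ m ∈ s, f m) - s.card * z := by
    rw [Finset.sum_sub_distrib]; simp
  rw [h3, h2] at h1
  linarith

lemma sum_one_special {n : ℕ} (a : Fin n) (f : Fin n → ℝ) (z : ℝ)
    (h : ∀ m, m ≠ a → f m = z) :
    ∑ m, f m = f a + ((n : ℝ) - 1) * z := by
  have := sum_eq_on_compl {a} f z (by simpa using h)
  simpa using this

lemma sum_two_special {n : ℕ} (a b : Fin n) (hab : a ≠ b) (f : Fin n → ℝ) (z : ℝ)
    (h : ∀ m, m ≠ a → m ≠ b → f m = z) :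
    ∑ m, f m = f a + f b + ((n : ℝ) - 2) * z := by
  have := sum_eq_on_compl {a, b} f z (by intro m hm; simp at hm; exact h m hm.1 hm.2)
  rw [Finset.sum_insert (by simpa using hab), Finset.sum_singleton,
    Finset.card_insert_of_notMem (by simpa using hab), Finset.card_singleton] at this
  push_cast at this
  linarith

lemma sum_three_special {n : ℕ} (a b c : Fin n) (hab : a ≠ b) (hac : a ≠ c) (hbc : b ≠ c)
    (f : Fin n → ℝ) (z : ℝ)
    (h : ∀ m, m ≠ a → m ≠ b → m ≠ c → f m = z) :
    ∑ m, f m = f a + f b + f c + ((n : ℝ) - 3) * z := by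
  have := sum_eq_on_compl {a, b, c} f z
    (by intro m hm; simp at hm; exact h m hm.1 hm.2.1 hm.2.2)
  rw [Finset.sum_insert (by simp [hab, hac]), Finset.sum_insert (by simpa using hbc),
    Finset.sum_singleton, Finset.card_insert_of_notMem (by simp [hab, hac]),
    Finset.card_insert_of_notMem (by simpa using hbc), Finset.card_singleton] at this
  push_cast at this
  linarith

/-- Expected values of the statistics `T₁, T₂, T₃` for an iid sample
`(X₁,Y₁),…,(Xₙ,Yₙ)` from the joint distribution of `(X,Y)`, in terms of
`α = E|X−X'|`, `β = E|Y−Y'|`, `γ = E[|X−X'||Y−Y'|]`, `δ = E[|X−X'||Y−Y''|]`. -/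
theorem expected_T1_T2_T3
    {Ω : Type*} [MeasurableSpace Ω] (μ : Measure Ω) [IsProbabilityMeasure μ]
    {n p q : ℕ} (hn : 3 < n)
    (X : Fin n → Ω → EuclideanSpace ℝ (Fin p))
    (Y : Fin n → Ω → EuclideanSpace ℝ (Fin q))
    (hX : ∀ i, Measurable (X i)) (hY : ∀ i, Measurable (Y i))
    (hindep : iIndepFun (fun i ω => (X i ω, Y i ω)) μ)
    (hid : ∀ i j : Fin n, IdentDistrib (fun ω => (X i ω, Y i ω))
      (fun ω => (X j ω, Y j ω)) μ μ)
    (i0 : Fin n) (i1 : Fin n) (i2 : Fin n)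
    (h0 : i0 = ⟨0, by omega⟩) (h1 : i1 = ⟨1, by omega⟩) (h2 : i2 = ⟨2, by omega⟩)
    (α β γ δ : ℝ)
    (hα : α = ∫ ω, ‖X i0 ω - X i1 ω‖ ∂μ)
    (hβ : β = ∫ ω, ‖Y i0 ω - Y i1 ω‖ ∂μ)
    (hγ : γ = ∫ ω, ‖X i0 ω - X i1 ω‖ * ‖Y i0 ω - Y i1 ω‖ ∂μ)
    (hδ : δ = ∫ ω, ‖X i0 ω - X i1 ω‖ * ‖Y i0 ω - Y i2 ω‖ ∂μ)
    (hintα : Integrable (fun ω => ‖X i0 ω - X i1 ω‖) μ)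
    (hintβ : Integrable (fun ω => ‖Y i0 ω - Y i1 ω‖) μ)
    (hintγ : Integrable (fun ω => ‖X i0 ω - X i1 ω‖ * ‖Y i0 ω - Y i1 ω‖) μ)
    (hintδ : Integrable (fun ω => ‖X i0 ω - X i1 ω‖ * ‖Y i0 ω - Y i2 ω‖) μ) :
    (∫ ω, (∑ k, ∑ l, if k = l then 0 else ‖X k ω - X l ω‖ * ‖Y k ω - Y l ω‖) ∂μ
       = (n : ℝ) * ((n : ℝ) - 1) * γ) ∧
    (∫ ω, (∑ k, ∑ l, ‖X k ω - X l ω‖) * (∑ k, ∑ l, ‖Y k ω - Y l ω‖) ∂μ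
       = (n : ℝ) * ((n : ℝ) - 1) *
         (((n : ℝ) - 2) * ((n : ℝ) - 3) * (α * β) + 2 * γ + 4 * ((n : ℝ) - 2) * δ)) ∧
    (∫ ω, (∑ k, (∑ l, ‖X k ω - X l ω‖) * (∑ l, ‖Y k ω - Y l ω‖)) ∂μ
       = (n : ℝ) * ((n : ℝ) - 1) * (((n : ℝ) - 2) * δ + γ)) := by
  classical
  have hi01 : i0 ≠ i1 := by subst h0 h1; simp [Fin.ext_iff]
  have hi02 : i0 ≠ i2 := by subst h0 h2; simp [Fin.ext_iff]
  have hi12 : i1 ≠ i2 := by subst h1 h2; simp [Fin.ext_iff]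
  have hZ : ∀ i : Fin n, Measurable (fun ω => (X i ω, Y i ω)) :=
    fun i => (hX i).prodMk (hY i)
  have hmap : ∀ i : Fin n, μ.map (fun ω => (X i ω, Y i ω))
      = μ.map (fun ω => (X i0 ω, Y i0 ω)) := fun i => (hid i i0).map_eq
  -- pair laws
  have hpairlaw : ∀ k l : Fin n, k ≠ l →
      μ.map (fun ω => ((X k ω, Y k ω), (X l ω, Y l ω)))
        = (μ.map (fun ω => (X i0 ω, Y i0 ω))).prod (μ.map (fun ω => (X i0 ω, Y i0 ω))) := by
    intro k l hkl
    have h := hindep.indepFun hkl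
    rw [indepFun_iff_map_prod_eq_prod_map_map (hZ k).aemeasurable (hZ l).aemeasurable] at h
    rw [h, hmap k, hmap l]
  have hpair : ∀ k l : Fin n, k ≠ l →
      IdentDistrib (fun ω => ((X k ω, Y k ω), (X l ω, Y l ω)))
        (fun ω => ((X i0 ω, Y i0 ω), (X i1 ω, Y i1 ω))) μ μ := by
    intro k l hkl
    exact ⟨((hZ k).prodMk (hZ l)).aemeasurable, ((hZ i0).prodMk (hZ i1)).aemeasurable,
      by rw [hpairlaw k l hkl, hpairlaw i0 i1 hi01]⟩
  -- triple laws
  have htriplaw : ∀ k l m : Fin n, k ≠ l → k ≠ m → l ≠ m →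
      μ.map (fun ω => ((X k ω, Y k ω), (X l ω, Y l ω), (X m ω, Y m ω)))
        = (μ.map (fun ω => (X i0 ω, Y i0 ω))).prod
            ((μ.map (fun ω => (X i0 ω, Y i0 ω))).prod (μ.map (fun ω => (X i0 ω, Y i0 ω)))) := by
    intro k l m hkl hkm hlm
    have h := (hindep.indepFun_prodMk hZ l m k (Ne.symm hkl) (Ne.symm hkm)).symm
    rw [indepFun_iff_map_prod_eq_prod_map_map (hZ k).aemeasurable
      ((hZ l).prodMk (hZ m)).aemeasurable] at h
    rw [h, hmap k, hpairlaw l m hlm]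
  have htrip : ∀ k l m : Fin n, k ≠ l → k ≠ m → l ≠ m →
      IdentDistrib (fun ω => ((X k ω, Y k ω), (X l ω, Y l ω), (X m ω, Y m ω)))
        (fun ω => ((X i0 ω, Y i0 ω), (X i1 ω, Y i1 ω), (X i2 ω, Y i2 ω))) μ μ := by
    intro k l m hkl hkm hlm
    exact ⟨((hZ k).prodMk ((hZ l).prodMk (hZ m))).aemeasurable,
      ((hZ i0).prodMk ((hZ i1).prodMk (hZ i2))).aemeasurable,
      by rw [htriplaw k l m hkl hkm hlm, htriplaw i0 i1 i2 hi01 hi02 hi12]⟩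
  -- measurable test functions
  have hmA : Measurable (fun w : ((EuclideanSpace ℝ (Fin p) × EuclideanSpace ℝ (Fin q)) ×
      (EuclideanSpace ℝ (Fin p) × EuclideanSpace ℝ (Fin q))) => ‖w.1.1 - w.2.1‖) := by fun_prop
  have hmB : Measurable (fun w : ((EuclideanSpace ℝ (Fin p) × EuclideanSpace ℝ (Fin q)) ×
      (EuclideanSpace ℝ (Fin p) × EuclideanSpace ℝ (Fin q))) => ‖w.1.2 - w.2.2‖) := by fun_prop
  have hmG : Measurable (fun w : ((EuclideanSpace ℝ (Fin p) × EuclideanSpace ℝ (Fin q)) ×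
      (EuclideanSpace ℝ (Fin p) × EuclideanSpace ℝ (Fin q))) =>
      ‖w.1.1 - w.2.1‖ * ‖w.1.2 - w.2.2‖) := by fun_prop
  have hmD : Measurable (fun w : ((EuclideanSpace ℝ (Fin p) × EuclideanSpace ℝ (Fin q)) ×
      (EuclideanSpace ℝ (Fin p) × EuclideanSpace ℝ (Fin q)) ×
      (EuclideanSpace ℝ (Fin p) × EuclideanSpace ℝ (Fin q))) =>
      ‖w.1.1 - w.2.1.1‖ * ‖w.1.2 - w.2.2.2‖) := by fun_prop
  -- expectations of single norms
  have hEa : ∀ k l : Fin n, k ≠ l → ∫ ω, ‖X k ω - X l ω‖ ∂μ = α := by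
    intro k l hkl; rw [hα]; exact ((hpair k l hkl).comp hmA).integral_eq
  have hEb : ∀ k l : Fin n, k ≠ l → ∫ ω, ‖Y k ω - Y l ω‖ ∂μ = β := by
    intro k l hkl; rw [hβ]; exact ((hpair k l hkl).comp hmB).integral_eq
  have hIa : ∀ k l : Fin n, k ≠ l → Integrable (fun ω => ‖X k ω - X l ω‖) μ := by
    intro k l hkl; exact ((hpair k l hkl).comp hmA).integrable_iff.2 hintα
  have hIb : ∀ k l : Fin n, k ≠ l → Integrable (fun ω => ‖Y k ω - Y l ω‖) μ := by
    intro k l hkl; exact ((hpair k l hkl).comp hmB).integrable_iff.2 hintβ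
  -- γ pattern
  have hEγ : ∀ k l : Fin n, k ≠ l →
      ∫ ω, ‖X k ω - X l ω‖ * ‖Y k ω - Y l ω‖ ∂μ = γ := by
    intro k l hkl; rw [hγ]; exact ((hpair k l hkl).comp hmG).integral_eq
  have hIγ : ∀ k l : Fin n, k ≠ l →
      Integrable (fun ω => ‖X k ω - X l ω‖ * ‖Y k ω - Y l ω‖) μ := by
    intro k l hkl; exact ((hpair k l hkl).comp hmG).integrable_iff.2 hintγ
  have hEγ' : ∀ k l : Fin n, k ≠ l →
      ∫ ω, ‖X k ω - X l ω‖ * ‖Y l ω - Y k ω‖ ∂μ = γ := by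
    intro k l hkl
    have e : (fun ω => ‖X k ω - X l ω‖ * ‖Y l ω - Y k ω‖)
        = fun ω => ‖X l ω - X k ω‖ * ‖Y l ω - Y k ω‖ := by
      funext ω; rw [norm_sub_rev (X k ω)]
    rw [e]; exact hEγ l k (Ne.symm hkl)
  have hIγ' : ∀ k l : Fin n, k ≠ l →
      Integrable (fun ω => ‖X k ω - X l ω‖ * ‖Y l ω - Y k ω‖) μ := by
    intro k l hkl
    have e : (fun ω => ‖X k ω - X l ω‖ * ‖Y l ω - Y k ω‖)
        = fun ω => ‖X l ω - X k ω‖ * ‖Y l ω - Y k ω‖ := by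
      funext ω; rw [norm_sub_rev (X k ω)]
    rw [e]; exact hIγ l k (Ne.symm hkl)
  -- δ patterns
  have hEδ : ∀ k l m : Fin n, k ≠ l → k ≠ m → l ≠ m →
      ∫ ω, ‖X k ω - X l ω‖ * ‖Y k ω - Y m ω‖ ∂μ = δ := by
    intro k l m hkl hkm hlm; rw [hδ]
    exact ((htrip k l m hkl hkm hlm).comp hmD).integral_eq
  have hIδ : ∀ k l m : Fin n, k ≠ l → k ≠ m → l ≠ m →
      Integrable (fun ω => ‖X k ω - X l ω‖ * ‖Y k ω - Y m ω‖) μ := by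
    intro k l m hkl hkm hlm
    exact ((htrip k l m hkl hkm hlm).comp hmD).integrable_iff.2 hintδ
  have eδb : ∀ k l m : Fin n, (fun ω => ‖X k ω - X l ω‖ * ‖Y l ω - Y m ω‖)
      = fun ω => ‖X l ω - X k ω‖ * ‖Y l ω - Y m ω‖ := by
    intro k l m; funext ω; rw [norm_sub_rev (X k ω)]
  have eδc : ∀ k l m : Fin n, (fun ω => ‖X k ω - X l ω‖ * ‖Y m ω - Y k ω‖)
      = fun ω => ‖X k ω - X l ω‖ * ‖Y k ω - Y m ω‖ := by
    intro k l m; funext ω; rw [norm_sub_rev (Y m ω)]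
  have eδd : ∀ k l m : Fin n, (fun ω => ‖X k ω - X l ω‖ * ‖Y m ω - Y l ω‖)
      = fun ω => ‖X l ω - X k ω‖ * ‖Y l ω - Y m ω‖ := by
    intro k l m; funext ω; rw [norm_sub_rev (X k ω), norm_sub_rev (Y m ω)]
  have hEδb : ∀ k l m : Fin n, k ≠ l → k ≠ m → l ≠ m →
      ∫ ω, ‖X k ω - X l ω‖ * ‖Y l ω - Y m ω‖ ∂μ = δ := by
    intro k l m hkl hkm hlm
    rw [eδb k l m]; exact hEδ l k m (Ne.symm hkl) hlm hkm
  have hEδc : ∀ k l m : Fin n, k ≠ l → k ≠ m → l ≠ m →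
      ∫ ω, ‖X k ω - X l ω‖ * ‖Y m ω - Y k ω‖ ∂μ = δ := by
    intro k l m hkl hkm hlm
    rw [eδc k l m]; exact hEδ k l m hkl hkm hlm
  have hEδd : ∀ k l m : Fin n, k ≠ l → k ≠ m → l ≠ m →
      ∫ ω, ‖X k ω - X l ω‖ * ‖Y m ω - Y l ω‖ ∂μ = δ := by
    intro k l m hkl hkm hlm
    rw [eδd k l m]; exact hEδ l k m (Ne.symm hkl) hlm hkm
  -- αβ pattern
  have hαβind : ∀ k l m r : Fin n, k ≠ m → k ≠ r → l ≠ m → l ≠ r →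
      IndepFun (fun ω => ‖X k ω - X l ω‖) (fun ω => ‖Y m ω - Y r ω‖) μ := by
    intro k l m r hkm hkr hlm hlr
    exact (hindep.indepFun_prodMk_prodMk hZ k l m r hkm hkr hlm hlr).comp hmA hmB
  have hEαβ : ∀ k l m r : Fin n, k ≠ l → m ≠ r → k ≠ m → k ≠ r → l ≠ m → l ≠ r →
      ∫ ω, ‖X k ω - X l ω‖ * ‖Y m ω - Y r ω‖ ∂μ = α * β := by
    intro k l m r hkl hmr hkm hkr hlm hlr
    have h := (hαβind k l m r hkm hkr hlm hlr).integral_fun_mul_eq_mul_integral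
      (hIa k l hkl).aestronglyMeasurable (hIb m r hmr).aestronglyMeasurable
    rw [hEa k l hkl, hEb m r hmr] at h
    exact h
  have hIαβ : ∀ k l m r : Fin n, k ≠ l → m ≠ r → k ≠ m → k ≠ r → l ≠ m → l ≠ r →
      Integrable (fun ω => ‖X k ω - X l ω‖ * ‖Y m ω - Y r ω‖) μ := by
    intro k l m r hkl hmr hkm hkr hlm hlr
    exact (hαβind k l m r hkm hkr hlm hlr).integrable_mul (hIa k l hkl) (hIb m r hmr)
  -- zero patterns
  have hz1 : ∀ k m r : Fin n,
      (fun ω => ‖X k ω - X k ω‖ * ‖Y m ω - Y r ω‖) = (fun _ : Ω => (0:ℝ)) := by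
    intro k m r; funext ω; simp
  have hz2 : ∀ k l m : Fin n,
      (fun ω => ‖X k ω - X l ω‖ * ‖Y m ω - Y m ω‖) = (fun _ : Ω => (0:ℝ)) := by
    intro k l m; funext ω; simp
  -- integrability of every atomic term a_{kl} b_{mr}
  have hInt : ∀ k l m r : Fin n,
      Integrable (fun ω => ‖X k ω - X l ω‖ * ‖Y m ω - Y r ω‖) μ := by
    intro k l m r
    by_cases hkl : k = l
    · rw [hkl, hz1 l m r]; exact integrable_const 0
    by_cases hmr : m = r
    · rw [hmr, hz2 k l r]; exact integrable_const 0
    by_cases hmk : m = k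
    · subst hmk
      by_cases hrl : r = l
      · subst hrl; exact hIγ m r hkl
      · exact hIδ m l r hkl hmr (fun h => hrl h.symm)
    by_cases hml : m = l
    · subst hml
      by_cases hrk : r = k
      · subst hrk
        exact hIγ' r m hkl
      · rw [eδb k m r]
        exact hIδ m k r (Ne.symm hkl) hmr (Ne.symm hrk)
    by_cases hrk : r = k
    · subst hrk
      rw [eδc r l m]
      exact hIδ r l m hkl (Ne.symm hmk) (fun h => hml (h.symm ▸ rfl))
    by_cases hrl : r = l
    · subst hrl
      rw [eδd k r m]
      exact hIδ r k m (Ne.symm hkl) (Ne.symm hmr) (fun h => hmk (h.symm ▸ rfl))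
    · exact hIαβ k l m r hkl hmr (Ne.symm hmk) (Ne.symm hrk) (Ne.symm hml) (Ne.symm hrl)
  refine ⟨?_, ?_, ?_⟩
  -- T₁
  · have hint1 : ∀ k l : Fin n, Integrable
        (fun ω => if k = l then (0:ℝ) else ‖X k ω - X l ω‖ * ‖Y k ω - Y l ω‖) μ := by
      intro k l; by_cases h : k = l
      · simp [h]
      · simpa only [if_neg h] using hIγ k l h
    rw [integral_finset_sum _ (fun k _ => integrable_finset_sum _ (fun l _ => hint1 k l))]
    have inner : ∀ k : Fin n,
        ∫ ω, ∑ l, (if k = l then (0:ℝ) else ‖X k ω - X l ω‖ * ‖Y k ω - Y l ω‖) ∂μ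
          = ((n:ℝ) - 1) * γ := by
      intro k
      rw [integral_finset_sum _ (fun l _ => hint1 k l)]
      have hs := sum_one_special (n := n) k
        (fun l => ∫ ω, (if k = l then (0:ℝ) else ‖X k ω - X l ω‖ * ‖Y k ω - Y l ω‖) ∂μ) γ
        (fun l hl => by
          simp only [if_neg (Ne.symm hl)]
          exact hEγ k l (Ne.symm hl))
      rw [hs]
      simp
    rw [Finset.sum_congr rfl (fun k _ => inner k), Finset.sum_const, Finset.card_univ,
      Fintype.card_fin, nsmul_eq_mul]
    ring
  -- T₂
  · have hrw2 : (fun ω => (∑ k, ∑ l, ‖X k ω - X l ω‖) * (∑ k, ∑ l, ‖Y k ω - Y l ω‖))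
        = fun ω => ∑ k, ∑ l, ∑ m, ∑ r, ‖X k ω - X l ω‖ * ‖Y m ω - Y r ω‖ := by
      funext ω
      rw [Finset.sum_mul_sum]
      refine Finset.sum_congr rfl fun k _ => ?_
      calc ∑ m, (∑ l, ‖X k ω - X l ω‖) * (∑ r, ‖Y m ω - Y r ω‖)
          = ∑ m, ∑ l, ∑ r, ‖X k ω - X l ω‖ * ‖Y m ω - Y r ω‖ :=
            Finset.sum_congr rfl fun m _ => Finset.sum_mul_sum _ _ _ _
        _ = ∑ l, ∑ m, ∑ r, ‖X k ω - X l ω‖ * ‖Y m ω - Y r ω‖ := Finset.sum_comm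
    rw [show (∫ ω, (∑ k, ∑ l, ‖X k ω - X l ω‖) * (∑ k, ∑ l, ‖Y k ω - Y l ω‖) ∂μ)
        = ∫ ω, ∑ k, ∑ l, ∑ m, ∑ r, ‖X k ω - X l ω‖ * ‖Y m ω - Y r ω‖ ∂μ from by rw [hrw2]]
    rw [integral_finset_sum _ (fun k _ => integrable_finset_sum _ (fun l _ =>
      integrable_finset_sum _ (fun m _ => integrable_finset_sum _ (fun r _ => hInt k l m r))))]
    have swap2 : ∀ k : Fin n,
        ∫ ω, ∑ l, ∑ m, ∑ r, ‖X k ω - X l ω‖ * ‖Y m ω - Y r ω‖ ∂μ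
          = ∑ l, ∑ m, ∑ r, ∫ ω, ‖X k ω - X l ω‖ * ‖Y m ω - Y r ω‖ ∂μ := by
      intro k
      rw [integral_finset_sum _ (fun l _ => integrable_finset_sum _ (fun m _ =>
        integrable_finset_sum _ (fun r _ => hInt k l m r)))]
      refine Finset.sum_congr rfl fun l _ => ?_
      rw [integral_finset_sum _ (fun m _ => integrable_finset_sum _ (fun r _ => hInt k l m r))]
      exact Finset.sum_congr rfl fun m _ => integral_finset_sum _ (fun r _ => hInt k l m r)
    -- rows
    have hrowk : ∀ k l : Fin n, k ≠ l →
        ∑ r, ∫ ω, ‖X k ω - X l ω‖ * ‖Y k ω - Y r ω‖ ∂μ = γ + ((n:ℝ) - 2) * δ := by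
      intro k l hkl
      have hs := sum_two_special (n := n) k l hkl
        (fun r => ∫ ω, ‖X k ω - X l ω‖ * ‖Y k ω - Y r ω‖ ∂μ) δ
        (fun r hrk hrl => hEδ k l r hkl (Ne.symm hrk) (Ne.symm hrl))
      rw [hs]; beta_reduce
      rw [show (∫ ω, ‖X k ω - X l ω‖ * ‖Y k ω - Y k ω‖ ∂μ) = 0 from by
        rw [hz2 k l k]; simp, hEγ k l hkl]
      ring
    have hrowl : ∀ k l : Fin n, k ≠ l →
        ∑ r, ∫ ω, ‖X k ω - X l ω‖ * ‖Y l ω - Y r ω‖ ∂μ = γ + ((n:ℝ) - 2) * δ := by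
      intro k l hkl
      have hs := sum_two_special (n := n) k l hkl
        (fun r => ∫ ω, ‖X k ω - X l ω‖ * ‖Y l ω - Y r ω‖ ∂μ) δ
        (fun r hrk hrl => hEδb k l r hkl (Ne.symm hrk) (Ne.symm hrl))
      rw [hs]; beta_reduce
      rw [hEγ' k l hkl, show (∫ ω, ‖X k ω - X l ω‖ * ‖Y l ω - Y l ω‖ ∂μ) = 0 from by
        rw [hz2 k l l]; simp]
      ring
    have hrowo : ∀ k l m : Fin n, k ≠ l → m ≠ k → m ≠ l →
        ∑ r, ∫ ω, ‖X k ω - X l ω‖ * ‖Y m ω - Y r ω‖ ∂μ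
          = 2 * δ + ((n:ℝ) - 3) * (α * β) := by
      intro k l m hkl hmk hml
      have hs := sum_three_special (n := n) k l m hkl (Ne.symm hmk) (Ne.symm hml)
        (fun r => ∫ ω, ‖X k ω - X l ω‖ * ‖Y m ω - Y r ω‖ ∂μ) (α * β)
        (fun r hrk hrl hrm => hEαβ k l m r hkl (fun h => hrm h.symm) (Ne.symm hmk)
          (Ne.symm hrk) (Ne.symm hml) (Ne.symm hrl))
      rw [hs]; beta_reduce
      rw [hEδc k l m hkl (Ne.symm hmk) (Ne.symm hml),
        hEδd k l m hkl (Ne.symm hmk) (Ne.symm hml),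
        show (∫ ω, ‖X k ω - X l ω‖ * ‖Y m ω - Y m ω‖ ∂μ) = 0 from by rw [hz2 k l m]; simp]
      ring
    have hcol : ∀ k l : Fin n, k ≠ l →
        ∑ m, ∑ r, ∫ ω, ‖X k ω - X l ω‖ * ‖Y m ω - Y r ω‖ ∂μ
          = ((n:ℝ) - 2) * ((n:ℝ) - 3) * (α * β) + 2 * γ + 4 * ((n:ℝ) - 2) * δ := by
      intro k l hkl
      have hs := sum_two_special (n := n) k l hkl
        (fun m => ∑ r, ∫ ω, ‖X k ω - X l ω‖ * ‖Y m ω - Y r ω‖ ∂μ)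
        (2 * δ + ((n:ℝ) - 3) * (α * β))
        (fun m hmk hml => hrowo k l m hkl hmk hml)
      rw [hs]; beta_reduce
      rw [hrowk k l hkl, hrowl k l hkl]
      ring
    have hdiag : ∀ k : Fin n,
        ∑ m, ∑ r, ∫ ω, ‖X k ω - X k ω‖ * ‖Y m ω - Y r ω‖ ∂μ = 0 := by
      intro k
      refine Finset.sum_eq_zero fun m _ => Finset.sum_eq_zero fun r _ => ?_
      rw [hz1 k m r]; simp
    have houter : ∀ k : Fin n,
        ∑ l, ∑ m, ∑ r, ∫ ω, ‖X k ω - X l ω‖ * ‖Y m ω - Y r ω‖ ∂μ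
          = ((n:ℝ) - 1) * (((n:ℝ) - 2) * ((n:ℝ) - 3) * (α * β) + 2 * γ + 4 * ((n:ℝ) - 2) * δ) := by
      intro k
      have hs := sum_one_special (n := n) k
        (fun l => ∑ m, ∑ r, ∫ ω, ‖X k ω - X l ω‖ * ‖Y m ω - Y r ω‖ ∂μ)
        (((n:ℝ) - 2) * ((n:ℝ) - 3) * (α * β) + 2 * γ + 4 * ((n:ℝ) - 2) * δ)
        (fun l hl => hcol k l (Ne.symm hl))
      rw [hs]; beta_reduce
      rw [hdiag k]
      ring
    rw [Finset.sum_congr rfl (fun k _ => (swap2 k).trans (houter k)), Finset.sum_const,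
      Finset.card_univ, Fintype.card_fin, nsmul_eq_mul]
    ring
  -- T₃
  · have hrw3 : (fun ω => ∑ k, (∑ l, ‖X k ω - X l ω‖) * (∑ l, ‖Y k ω - Y l ω‖))
        = fun ω => ∑ k, ∑ l, ∑ m, ‖X k ω - X l ω‖ * ‖Y k ω - Y m ω‖ := by
      funext ω
      exact Finset.sum_congr rfl fun k _ => Finset.sum_mul_sum _ _ _ _
    rw [show (∫ ω, (∑ k, (∑ l, ‖X k ω - X l ω‖) * (∑ l, ‖Y k ω - Y l ω‖)) ∂μ)
        = ∫ ω, ∑ k, ∑ l, ∑ m, ‖X k ω - X l ω‖ * ‖Y k ω - Y m ω‖ ∂μ from by rw [hrw3]]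
    rw [integral_finset_sum _ (fun k _ => integrable_finset_sum _ (fun l _ =>
      integrable_finset_sum _ (fun m _ => hInt k l k m)))]
    have inner3 : ∀ k : Fin n,
        ∫ ω, ∑ l, ∑ m, ‖X k ω - X l ω‖ * ‖Y k ω - Y m ω‖ ∂μ
          = ((n:ℝ) - 1) * (γ + ((n:ℝ) - 2) * δ) := by
      intro k
      rw [integral_finset_sum _ (fun l _ => integrable_finset_sum _ (fun m _ => hInt k l k m))]
      have hrow : ∀ l : Fin n, l ≠ k →
          ∫ ω, ∑ m, ‖X k ω - X l ω‖ * ‖Y k ω - Y m ω‖ ∂μ = γ + ((n:ℝ) - 2) * δ := by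
        intro l hlk
        rw [integral_finset_sum _ (fun m _ => hInt k l k m)]
        have hs := sum_two_special (n := n) k l (Ne.symm hlk)
          (fun m => ∫ ω, ‖X k ω - X l ω‖ * ‖Y k ω - Y m ω‖ ∂μ) δ
          (fun m hmk hml => hEδ k l m (Ne.symm hlk) (Ne.symm hmk) (Ne.symm hml))
        rw [hs]; beta_reduce
        rw [show (∫ ω, ‖X k ω - X l ω‖ * ‖Y k ω - Y k ω‖ ∂μ) = 0 from by
          rw [hz2 k l k]; simp, hEγ k l (Ne.symm hlk)]
        ring
      have hdiag3 : ∫ ω, ∑ m, ‖X k ω - X k ω‖ * ‖Y k ω - Y m ω‖ ∂μ = 0 := by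
        rw [integral_finset_sum _ (fun m _ => hInt k k k m)]
        refine Finset.sum_eq_zero fun m _ => ?_
        rw [hz1 k k m]; simp
      have hs := sum_one_special (n := n) k
        (fun l => ∫ ω, ∑ m, ‖X k ω - X l ω‖ * ‖Y k ω - Y m ω‖ ∂μ)
        (γ + ((n:ℝ) - 2) * δ) (fun l hl => hrow l hl)
      rw [hs]; beta_reduce
      rw [hdiag3]
      ring
    rw [Finset.sum_congr rfl (fun k _ => inner3 k), Finset.sum_const, Finset.card_univ,
      Fintype.card_fin, nsmul_eq_mul]
    ring
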